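/- (Corollary 5.1 of the paper for the Kolmogorov pseudo-metric, simple-function case.) For every u ∈ 𝒰^c there exists v ∈ 𝒰_N^c such that d_I(u,v) ≤ 2L(β₁ + β₂); namely, the Type-1 piecewise linear function built from the gridpoint values of u belongs to 𝒰_N^c and is within pseudo-distance 2L(β₁+β₂) of u. Since moreover 𝒰_N^c ⊆ 𝒰^c, the Hausdorff distance under d_I, namely ℍ_I(𝒰^c, 𝒰_N^c) := max{ sup_{u∈𝒰^c} inf_{v∈𝒰_N^c} d_I(u,v), sup_{v∈𝒰_N^c} inf_{u∈𝒰^c} d_I(v,u) }, satisfies ℍ_I(𝒰^c, 𝒰_N^c) ≤ 2L(β₁ + β₂), where β₁ := max_{1≤i≤N₁−1}(x_{i+1}−x_i) and β₂ := max_{1≤j≤N₂−1}(y_{j+1}−y_j). -/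

import Mathlib

open Finset Set
open scoped Classical

noncomputable section

/-- Lower-triangle linear piece of the Type-1 PLA over cell `(i,j)`. -/
def u1l (x y : ℕ → ℝ) (u : ℕ → ℕ → ℝ) (i j : ℕ) (p q : ℝ) : ℝ :=
  ((x (i + 1) - p) / (x (i + 1) - x i)) * u i j
    + ((p - x i) / (x (i + 1) - x i) - (q - y j) / (y (j + 1) - y j)) * u (i + 1) j
    + ((q - y j) / (y (j + 1) - y j)) * u (i + 1) (j + 1)

/-- Upper-triangle linear piece of the Type-1 PLA over cell `(i,j)`. -/
def u1u (x y : ℕ → ℝ) (u : ℕ → ℕ → ℝ) (i j : ℕ) (p q : ℝ) : ℝ :=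
  ((y (j + 1) - q) / (y (j + 1) - y j)) * u i j
    + ((q - y j) / (y (j + 1) - y j) - (p - x i) / (x (i + 1) - x i)) * u i (j + 1)
    + ((p - x i) / (x (i + 1) - x i)) * u (i + 1) (j + 1)

/-- Membership in the half-open interval `X_i` (closed at the left end for `i = 1`). -/
def memX (x : ℕ → ℝ) (i : ℕ) (p : ℝ) : Prop :=
  if i = 1 then x 1 ≤ p ∧ p ≤ x 2 else x i < p ∧ p ≤ x (i + 1)

/-- Membership in the cell `T_{i,j} = X_i × Y_j`. -/
def memCell (x y : ℕ → ℝ) (i j : ℕ) (p q : ℝ) : Prop :=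
  memX x i p ∧ memX y j q

/-- The Type-1 piecewise linear function built from the grid values `u i j`. -/
def uPL (N₁ N₂ : ℕ) (x y : ℕ → ℝ) (u : ℕ → ℕ → ℝ) (p q : ℝ) : ℝ :=
  ∑ i ∈ Finset.Icc 1 (N₁ - 1), ∑ j ∈ Finset.Icc 1 (N₂ - 1),
    if memCell x y i j p q then
      (if (q - y j) * (x (i + 1) - x i) ≤ (p - x i) * (y (j + 1) - y j)
        then u1l x y u i j p q else u1u x y u i j p q)
    else 0


/-- Membership in the class `𝒰`: continuous, componentwise non-decreasing, `[0,1]`-valued,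
normalized utility functions on `T` satisfying the conservative property and ℓ¹-Lipschitz
continuity with modulus `L`. -/
def memU (N₁ N₂ : ℕ) (x y : ℕ → ℝ) (L : ℝ) (u : ℝ → ℝ → ℝ) : Prop :=
  ContinuousOn (fun pq : ℝ × ℝ => u pq.1 pq.2)
      (Set.Icc (x 1) (x N₁) ×ˢ Set.Icc (y 1) (y N₂)) ∧
  (∀ p p' q q', p ∈ Set.Icc (x 1) (x N₁) → p' ∈ Set.Icc (x 1) (x N₁) →
    q ∈ Set.Icc (y 1) (y N₂) → q' ∈ Set.Icc (y 1) (y N₂) →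
    p ≤ p' → q ≤ q' → u p q ≤ u p' q') ∧
  (∀ p ∈ Set.Icc (x 1) (x N₁), ∀ q ∈ Set.Icc (y 1) (y N₂), u p q ∈ Set.Icc (0 : ℝ) 1) ∧
  u (x 1) (y 1) = 0 ∧ u (x N₁) (y N₂) = 1 ∧
  (∀ a b c d : ℝ, x 1 ≤ a → a ≤ b → b ≤ x N₁ → y 1 ≤ c → c ≤ d → d ≤ y N₂ →
    u a c + u b d ≤ u a d + u b c) ∧
  (∀ p p' q q', p ∈ Set.Icc (x 1) (x N₁) → p' ∈ Set.Icc (x 1) (x N₁) →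
    q ∈ Set.Icc (y 1) (y N₂) → q' ∈ Set.Icc (y 1) (y N₂) →
    |u p q - u p' q'| ≤ L * (|p - p'| + |q - q'|))

/-- Membership in the ambiguity set `𝒰^c`: members of `𝒰` satisfying the linear gridpoint
constraints (the form taken by the Lebesgue–Stieltjes constraints when each `ψ_l` is a simple
function constant on the cells). -/
def memUc (N₁ N₂ M : ℕ) (x y : ℕ → ℝ) (L : ℝ) (a : ℕ → ℕ → ℕ → ℝ) (c : ℕ → ℝ)
    (u : ℝ → ℝ → ℝ) : Prop :=
  memU N₁ N₂ x y L u ∧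
  ∀ l ∈ Finset.Icc 1 M,
    ∑ i ∈ Finset.Icc 1 N₁, ∑ j ∈ Finset.Icc 1 N₂, a l i j * u (x i) (y j) ≤ c l

/-- Membership in `𝒰_N^c`: members of `𝒰^c` that coincide on `T` with the Type-1 piecewise
linear function built from their own gridpoint values. -/
def memUNc (N₁ N₂ M : ℕ) (x y : ℕ → ℝ) (L : ℝ) (a : ℕ → ℕ → ℕ → ℝ) (c : ℕ → ℝ)
    (u : ℝ → ℝ → ℝ) : Prop :=
  memUc N₁ N₂ M x y L a c u ∧
  ∀ p ∈ Set.Icc (x 1) (x N₁), ∀ q ∈ Set.Icc (y 1) (y N₂),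
    u p q = uPL N₁ N₂ x y (fun i j => u (x i) (y j)) p q

/-- max of the two affine pieces -/
def Fm (x y : ℕ → ℝ) (g : ℕ → ℕ → ℝ) (i j : ℕ) (p q : ℝ) : ℝ :=
  max (u1l x y g i j p q) (u1u x y g i j p q)

variable {x y : ℕ → ℝ} {g : ℕ → ℕ → ℝ} {i j : ℕ}

lemma u1l_sub_u1u (hdx : x i < x (i+1)) (hdy : y j < y (j+1)) (p q : ℝ) :
    u1l x y g i j p q - u1u x y g i j p q
      = (g (i+1) j + g i (j+1) - g i j - g (i+1) (j+1))
          * ((p - x i)/(x (i+1) - x i) - (q - y j)/(y (j+1) - y j)) := by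
  have h1 : x (i+1) - x i ≠ 0 := by linarith
  have h2 : y (j+1) - y j ≠ 0 := by linarith
  simp only [u1l, u1u]
  field_simp
  ring

/-- the `if` in `uPL` equals the max -/
lemma ite_eq_Fm (hdx : x i < x (i+1)) (hdy : y j < y (j+1))
    (hs : g i j + g (i+1) (j+1) ≤ g (i+1) j + g i (j+1)) (p q : ℝ) :
    (if (q - y j) * (x (i + 1) - x i) ≤ (p - x i) * (y (j + 1) - y j)
        then u1l x y g i j p q else u1u x y g i j p q) = Fm x y g i j p q := by
  have h1 : (0:ℝ) < x (i+1) - x i := by linarith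
  have h2 : (0:ℝ) < y (j+1) - y j := by linarith
  have hQP : ((q - y j) * (x (i + 1) - x i) ≤ (p - x i) * (y (j + 1) - y j)) ↔
      (q - y j)/(y (j+1) - y j) ≤ (p - x i)/(x (i+1) - x i) := by
    rw [div_le_div_iff₀ h2 h1]
  have hd := u1l_sub_u1u (g := g) hdx hdy p q
  split_ifs with h
  · rw [hQP] at h
    have : u1u x y g i j p q ≤ u1l x y g i j p q := by nlinarith [hd]
    exact (max_eq_left this).symm
  · rw [hQP, not_le] at h
    have : u1l x y g i j p q ≤ u1u x y g i j p q := by nlinarith [hd]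
    exact (max_eq_right this).symm

lemma abs4 {a b c d : ℝ} (hab : a ≤ b) (hcd : c ≤ d) :
    |a - c| + |b - d| ≤ |a - d| + |b - c| := by
  rcases abs_cases (a - c) with ⟨h1, h1'⟩ | ⟨h1, h1'⟩ <;>
  rcases abs_cases (b - d) with ⟨h2, h2'⟩ | ⟨h2, h2'⟩ <;>
  rcases abs_cases (a - d) with ⟨h3, h3'⟩ | ⟨h3, h3'⟩ <;>
  rcases abs_cases (b - c) with ⟨h4, h4'⟩ | ⟨h4, h4'⟩ <;> linarith

lemma max_shift {A A' B B' D : ℝ} (h1 : A ≤ A') (h2 : A' ≤ A + D)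
    (h3 : B ≤ B') (h4 : B' ≤ B + D) :
    max A B ≤ max A' B' ∧ max A' B' ≤ max A B + D := by
  constructor
  · exact max_le (le_trans h1 (le_max_left _ _)) (le_trans h3 (le_max_right _ _))
  · exact max_le (le_trans h2 (by simp [le_max_left])) (le_trans h4 (by simp [le_max_right]))

/-- monotone + Lipschitz in `p` on all of ℝ². -/
lemma Fm_p {L : ℝ} (hdx : x i < x (i+1))
    (hm1 : g i j ≤ g (i+1) j) (hm2 : g i (j+1) ≤ g (i+1) (j+1))
    (hl1 : g (i+1) j - g i j ≤ L * (x (i+1) - x i))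
    (hl2 : g (i+1) (j+1) - g i (j+1) ≤ L * (x (i+1) - x i))
    {p p' : ℝ} (q : ℝ) (hpp : p ≤ p') :
    Fm x y g i j p q ≤ Fm x y g i j p' q ∧
      Fm x y g i j p' q ≤ Fm x y g i j p q + L * (p' - p) := by
  have hdx0 : (0:ℝ) < x (i+1) - x i := by linarith
  have hA : u1l x y g i j p' q - u1l x y g i j p q
      = (p' - p) / (x (i+1) - x i) * (g (i+1) j - g i j) := by
    simp only [u1l]; field_simp; ring
  have hB : u1u x y g i j p' q - u1u x y g i j p q
      = (p' - p) / (x (i+1) - x i) * (g (i+1) (j+1) - g i (j+1)) := by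
    simp only [u1u]; field_simp; ring
  have hr : 0 ≤ (p' - p) / (x (i+1) - x i) := div_nonneg (by linarith) hdx0.le
  have hr2 : (p' - p) / (x (i+1) - x i) * (L * (x (i+1) - x i)) = L * (p' - p) := by
    field_simp
  have e1 : u1l x y g i j p q ≤ u1l x y g i j p' q := by nlinarith
  have e2 : u1l x y g i j p' q ≤ u1l x y g i j p q + L * (p' - p) := by nlinarith
  have e3 : u1u x y g i j p q ≤ u1u x y g i j p' q := by nlinarith
  have e4 : u1u x y g i j p' q ≤ u1u x y g i j p q + L * (p' - p) := by nlinarith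
  exact max_shift e1 e2 e3 e4

/-- monotone + Lipschitz in `q` on all of ℝ². -/
lemma Fm_q {L : ℝ} (hdy : y j < y (j+1))
    (hm1 : g (i+1) j ≤ g (i+1) (j+1)) (hm2 : g i j ≤ g i (j+1))
    (hl1 : g (i+1) (j+1) - g (i+1) j ≤ L * (y (j+1) - y j))
    (hl2 : g i (j+1) - g i j ≤ L * (y (j+1) - y j))
    (p : ℝ) {q q' : ℝ} (hqq : q ≤ q') :
    Fm x y g i j p q ≤ Fm x y g i j p q' ∧
      Fm x y g i j p q' ≤ Fm x y g i j p q + L * (q' - q) := by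
  have hdy0 : (0:ℝ) < y (j+1) - y j := by linarith
  have hA : u1l x y g i j p q' - u1l x y g i j p q
      = (q' - q) / (y (j+1) - y j) * (g (i+1) (j+1) - g (i+1) j) := by
    simp only [u1l]; field_simp; ring
  have hB : u1u x y g i j p q' - u1u x y g i j p q
      = (q' - q) / (y (j+1) - y j) * (g i (j+1) - g i j) := by
    simp only [u1u]; field_simp; ring
  have hr : 0 ≤ (q' - q) / (y (j+1) - y j) := div_nonneg (by linarith) hdy0.le
  have hr2 : (q' - q) / (y (j+1) - y j) * (L * (y (j+1) - y j)) = L * (q' - q) := by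
    field_simp
  have e1 : u1l x y g i j p q ≤ u1l x y g i j p q' := by nlinarith
  have e2 : u1l x y g i j p q' ≤ u1l x y g i j p q + L * (q' - q) := by nlinarith
  have e3 : u1u x y g i j p q ≤ u1u x y g i j p q' := by nlinarith
  have e4 : u1u x y g i j p q' ≤ u1u x y g i j p q + L * (q' - q) := by nlinarith
  exact max_shift e1 e2 e3 e4

lemma max_half (A B : ℝ) : max A B = (A + B + |A - B|) / 2 := by
  rcases abs_cases (A - B) with ⟨h, h'⟩ | ⟨h, h'⟩
  · rw [h, max_eq_left (by linarith)]; ring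
  · rw [h, max_eq_right (by linarith)]; ring

/-- submodularity on all of ℝ². -/
lemma Fm_sub (hdx : x i < x (i+1)) (hdy : y j < y (j+1))
    (hs : g i j + g (i+1) (j+1) ≤ g (i+1) j + g i (j+1))
    {a b c d : ℝ} (hab : a ≤ b) (hcd : c ≤ d) :
    Fm x y g i j a c + Fm x y g i j b d ≤ Fm x y g i j a d + Fm x y g i j b c := by
  have hdx0 : (0:ℝ) < x (i+1) - x i := by linarith
  have hdy0 : (0:ℝ) < y (j+1) - y j := by linarith
  set s := g (i+1) j + g i (j+1) - g i j - g (i+1) (j+1) with hsdef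
  have hs0 : 0 ≤ s := by simp [hsdef]; linarith
  have key : ∀ p q : ℝ, |u1l x y g i j p q - u1u x y g i j p q|
      = s * |(p - x i)/(x (i+1) - x i) - (q - y j)/(y (j+1) - y j)| := by
    intro p q
    rw [u1l_sub_u1u hdx hdy, abs_mul, abs_of_nonneg hs0]
  have aff : u1l x y g i j a c + u1u x y g i j a c + (u1l x y g i j b d + u1u x y g i j b d)
      = u1l x y g i j a d + u1u x y g i j a d + (u1l x y g i j b c + u1u x y g i j b c) := by
    simp only [u1l, u1u]; ring
  have habs : |(a - x i)/(x (i+1) - x i) - (c - y j)/(y (j+1) - y j)|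
      + |(b - x i)/(x (i+1) - x i) - (d - y j)/(y (j+1) - y j)|
      ≤ |(a - x i)/(x (i+1) - x i) - (d - y j)/(y (j+1) - y j)|
      + |(b - x i)/(x (i+1) - x i) - (c - y j)/(y (j+1) - y j)| :=
    abs4 ((div_le_div_iff_of_pos_right hdx0).mpr (by linarith))
      ((div_le_div_iff_of_pos_right hdy0).mpr (by linarith))
  simp only [Fm, max_half, key]
  nlinarith [mul_le_mul_of_nonneg_left habs hs0]

/-- column interpolation (value of the PLA on vertical gridline `x i`). -/
def colI (y : ℕ → ℝ) (g : ℕ → ℕ → ℝ) (i j : ℕ) (q : ℝ) : ℝ :=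
  ((y (j+1) - q)/(y (j+1) - y j)) * g i j + ((q - y j)/(y (j+1) - y j)) * g i (j+1)

/-- row interpolation (value of the PLA on horizontal gridline `y j`). -/
def rowI (x : ℕ → ℝ) (g : ℕ → ℕ → ℝ) (i j : ℕ) (p : ℝ) : ℝ :=
  ((x (i+1) - p)/(x (i+1) - x i)) * g i j + ((p - x i)/(x (i+1) - x i)) * g (i+1) j

lemma Fm_left (hdx : x i < x (i+1)) (hdy : y j < y (j+1))
    (hs : g i j + g (i+1) (j+1) ≤ g (i+1) j + g i (j+1))
    {q : ℝ} (hq : y j ≤ q) : Fm x y g i j (x i) q = colI y g i j q := by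
  have hdx0 : (0:ℝ) < x (i+1) - x i := by linarith
  have hdy0 : (0:ℝ) < y (j+1) - y j := by linarith
  have hd := u1l_sub_u1u (g := g) hdx hdy (x i) q
  have hQ : 0 ≤ (q - y j)/(y (j+1) - y j) := div_nonneg (by linarith) hdy0.le
  have hle : u1l x y g i j (x i) q ≤ u1u x y g i j (x i) q := by
    have : (x i - x i)/(x (i+1) - x i) = 0 := by simp
    nlinarith [hd]
  rw [Fm, max_eq_right hle, u1u, colI]
  field_simp
  ring

lemma Fm_right (hdx : x i < x (i+1)) (hdy : y j < y (j+1))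
    (hs : g i j + g (i+1) (j+1) ≤ g (i+1) j + g i (j+1))
    {q : ℝ} (hq : q ≤ y (j+1)) : Fm x y g i j (x (i+1)) q = colI y g (i+1) j q := by
  have hdx0 : (0:ℝ) < x (i+1) - x i := by linarith
  have hdy0 : (0:ℝ) < y (j+1) - y j := by linarith
  have hd := u1l_sub_u1u (g := g) hdx hdy (x (i+1)) q
  have hP : (x (i+1) - x i)/(x (i+1) - x i) = 1 := by field_simp
  have hQ : (q - y j)/(y (j+1) - y j) ≤ 1 := by
    rw [div_le_one hdy0]; linarith
  have hle : u1u x y g i j (x (i+1)) q ≤ u1l x y g i j (x (i+1)) q := by nlinarith [hd]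
  rw [Fm, max_eq_left hle, u1l, colI]
  field_simp
  ring


lemma Fm_bot (hdx : x i < x (i+1)) (hdy : y j < y (j+1))
    (hs : g i j + g (i+1) (j+1) ≤ g (i+1) j + g i (j+1))
    {p : ℝ} (hp : x i ≤ p) : Fm x y g i j p (y j) = rowI x g i j p := by
  have hdx0 : (0:ℝ) < x (i+1) - x i := by linarith
  have hdy0 : (0:ℝ) < y (j+1) - y j := by linarith
  have hd := u1l_sub_u1u (g := g) hdx hdy p (y j)
  have hP : 0 ≤ (p - x i)/(x (i+1) - x i) := div_nonneg (by linarith) hdx0.le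
  have hle : u1u x y g i j p (y j) ≤ u1l x y g i j p (y j) := by
    have : (y j - y j)/(y (j+1) - y j) = 0 := by simp
    nlinarith [hd]
  rw [Fm, max_eq_left hle, u1l, rowI]
  field_simp
  ring

lemma Fm_top (hdx : x i < x (i+1)) (hdy : y j < y (j+1))
    (hs : g i j + g (i+1) (j+1) ≤ g (i+1) j + g i (j+1))
    {p : ℝ} (hp : p ≤ x (i+1)) : Fm x y g i j p (y (j+1)) = rowI x g i (j+1) p := by
  have hdx0 : (0:ℝ) < x (i+1) - x i := by linarith
  have hdy0 : (0:ℝ) < y (j+1) - y j := by linarith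
  have hd := u1l_sub_u1u (g := g) hdx hdy p (y (j+1))
  have hQ : (y (j+1) - y j)/(y (j+1) - y j) = 1 := by field_simp
  have hP : (p - x i)/(x (i+1) - x i) ≤ 1 := by
    rw [div_le_one hdx0]; linarith
  have hle : u1l x y g i j p (y (j+1)) ≤ u1u x y g i j p (y (j+1)) := by nlinarith [hd]
  rw [Fm, max_eq_right hle, u1u, rowI]
  field_simp
  ring


lemma colI_bot (hdy : y j < y (j+1)) (i : ℕ) : colI y g i j (y j) = g i j := by
  have h2 : y (j+1) - y j ≠ 0 := by linarith
  rw [colI]; field_simp; ring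

lemma colI_top (hdy : y j < y (j+1)) (i : ℕ) : colI y g i j (y (j+1)) = g i (j+1) := by
  have h2 : y (j+1) - y j ≠ 0 := by linarith
  rw [colI]; field_simp; ring

lemma rowI_left (hdx : x i < x (i+1)) (j : ℕ) : rowI x g i j (x i) = g i j := by
  have h2 : x (i+1) - x i ≠ 0 := by linarith
  rw [rowI]; field_simp; ring

lemma rowI_right (hdx : x i < x (i+1)) (j : ℕ) : rowI x g i j (x (i+1)) = g (i+1) j := by
  have h2 : x (i+1) - x i ≠ 0 := by linarith
  rw [rowI]; field_simp; ring

lemma xmono {N : ℕ} (hx : ∀ k, 1 ≤ k → k < N → x k < x (k+1)) :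
    ∀ i j, 1 ≤ i → i ≤ j → j ≤ N → x i ≤ x j := by
  intro i j hi hij hjN
  induction j with
  | zero => omega
  | succ j ih =>
    rcases Nat.lt_or_ge i (j+1) with h | h
    · have h1 : x i ≤ x j := ih (by omega) (by omega)
      have h2 : x j < x (j+1) := hx j (by omega) (by omega)
      linarith
    · have : i = j + 1 := by omega
      rw [this]

lemma locateX {x : ℕ → ℝ} {N : ℕ} (hN : 2 ≤ N) (hx : ∀ i, 1 ≤ i → i < N → x i < x (i+1))
    {p : ℝ} (h1 : x 1 ≤ p) (h2 : p ≤ x N) :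
    ∃ i, 1 ≤ i ∧ i ≤ N - 1 ∧ memX x i p := by
  induction N, hN using Nat.le_induction with
  | base =>
    refine ⟨1, le_refl _, le_refl _, ?_⟩
    rw [memX, if_pos rfl]; exact ⟨h1, h2⟩
  | succ N hN ih =>
    by_cases hp : p ≤ x N
    · obtain ⟨i, hi1, hi2, hi3⟩ := ih (fun i ha hb => hx i ha (by omega)) hp
      exact ⟨i, hi1, by omega, hi3⟩
    · refine ⟨N, by omega, by omega, ?_⟩
      rw [memX, if_neg (by omega)]
      exact ⟨lt_of_not_ge hp, h2⟩

lemma memX_closed {x : ℕ → ℝ} {i : ℕ} {p : ℝ} (h : memX x i p) :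
    x i ≤ p ∧ p ≤ x (i+1) := by
  rw [memX] at h
  split_ifs at h with hi
  · subst hi; exact ⟨h.1, h.2⟩
  · exact ⟨h.1.le, h.2⟩

lemma memX_unique {x : ℕ → ℝ} {N : ℕ} (hx : ∀ k, 1 ≤ k → k < N → x k < x (k+1))
    {i i' : ℕ} (hi : 1 ≤ i) (hi2 : i ≤ N - 1) (hi' : 1 ≤ i') (hi2' : i' ≤ N - 1)
    {p : ℝ} (h : memX x i p) (h' : memX x i' p) : i = i' := by
  by_contra hne
  rcases Nat.lt_or_ge i i' with hlt | hge
  · have hx2 : x i' < p := by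
      rw [memX, if_neg (by omega)] at h'; exact h'.1
    have : p ≤ x (i+1) := (memX_closed h).2
    have : x (i+1) ≤ x i' := xmono hx (i+1) i' (by omega) (by omega) (by omega)
    linarith
  · have hlt : i' < i := by omega
    have hx2 : x i < p := by
      rw [memX, if_neg (by omega)] at h; exact h.1
    have : p ≤ x (i'+1) := (memX_closed h').2
    have : x (i'+1) ≤ x i := xmono hx (i'+1) i (by omega) (by omega) (by omega)
    linarith

/-- the sum defining `uPL` collapses at the cell containing `(p,q)` -/
lemma uPL_collapse {N₁ N₂ : ℕ} {x y : ℕ → ℝ} {g : ℕ → ℕ → ℝ}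
    (hx : ∀ k, 1 ≤ k → k < N₁ → x k < x (k+1))
    (hy : ∀ k, 1 ≤ k → k < N₂ → y k < y (k+1))
    (hsub : ∀ i j, 1 ≤ i → i ≤ N₁ - 1 → 1 ≤ j → j ≤ N₂ - 1 →
      g i j + g (i+1) (j+1) ≤ g (i+1) j + g i (j+1))
    {i₀ j₀ : ℕ} (hi : 1 ≤ i₀) (hi2 : i₀ ≤ N₁ - 1) (hj : 1 ≤ j₀) (hj2 : j₀ ≤ N₂ - 1)
    {p q : ℝ} (hc : memCell x y i₀ j₀ p q) :
    uPL N₁ N₂ x y g p q = Fm x y g i₀ j₀ p q := by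
  rw [uPL]
  rw [Finset.sum_eq_single_of_mem i₀ (Finset.mem_Icc.mpr ⟨hi, hi2⟩)]
  · rw [Finset.sum_eq_single_of_mem j₀ (Finset.mem_Icc.mpr ⟨hj, hj2⟩)]
    · rw [if_pos hc]
      exact ite_eq_Fm (hx i₀ hi (by omega)) (hy j₀ hj (by omega))
        (hsub i₀ j₀ hi hi2 hj hj2) p q
    · intro j hj' hne
      rw [if_neg]
      intro hmem
      exact hne (memX_unique hy (Finset.mem_Icc.mp hj').1 (Finset.mem_Icc.mp hj').2
        hj hj2 hmem.2 hc.2)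
  · intro i hi' hne
    apply Finset.sum_eq_zero
    intro j hj'
    rw [if_neg]
    intro hmem
    exact hne (memX_unique hx (Finset.mem_Icc.mp hi').1 (Finset.mem_Icc.mp hi').2
      hi hi2 hmem.1 hc.1)

lemma Fm_stepX {N₁ : ℕ} {x y : ℕ → ℝ} {g : ℕ → ℕ → ℝ}
    (hx : ∀ k, 1 ≤ k → k < N₁ → x k < x (k+1))
    {i₀ i j₀ : ℕ} (hdy : y j₀ < y (j₀+1))
    (hs : ∀ k, 1 ≤ k → k ≤ N₁ - 1 → g k j₀ + g (k+1) (j₀+1) ≤ g (k+1) j₀ + g k (j₀+1))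
    (hi₀ : 1 ≤ i₀) (hi₀2 : i₀ ≤ N₁ - 1) (hi : 1 ≤ i) (hi2 : i ≤ N₁ - 1)
    {p q : ℝ} (hm : memX x i₀ p) (hp1 : x i ≤ p) (hp2 : p ≤ x (i+1))
    (hq1 : y j₀ ≤ q) (hq2 : q ≤ y (j₀+1)) :
    Fm x y g i₀ j₀ p q = Fm x y g i j₀ p q := by
  have hcl := memX_closed hm
  by_cases he : i₀ = i
  · rw [he]
  · have hN : 2 ≤ N₁ := by omega
    have hii : i = i₀ + 1 := by
      rcases Nat.lt_or_ge i₀ i with hlt | hge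
      · by_contra hne
        have h5 : x (i-1) < x (i-1+1) := hx (i-1) (by omega) (by omega)
        rw [show i-1+1 = i from by omega] at h5
        have h6 : x (i₀+1) ≤ x (i-1) := xmono hx (i₀+1) (i-1) (by omega) (by omega) (by omega)
        linarith [hcl.2]
      · have hlt : i < i₀ := by omega
        have hx2 : x i₀ < p := by
          rw [memX, if_neg (by omega)] at hm; exact hm.1
        have h6 : x (i+1) ≤ x i₀ := xmono hx (i+1) i₀ (by omega) (by omega) (by omega)
        linarith
    have hpx : p = x (i₀+1) := by
      rw [hii] at hp1; exact le_antisymm hcl.2 hp1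
    rw [hpx, hii]
    rw [Fm_right (hx i₀ hi₀ (by omega)) hdy (hs i₀ hi₀ hi₀2) hq2]
    rw [Fm_left (hx (i₀+1) (by omega) (by omega)) hdy (hs (i₀+1) (by omega) (by omega)) hq1]

lemma Fm_stepY {N₂ : ℕ} {x y : ℕ → ℝ} {g : ℕ → ℕ → ℝ}
    (hy : ∀ k, 1 ≤ k → k < N₂ → y k < y (k+1))
    {j₀ j i : ℕ} (hdx : x i < x (i+1))
    (hs : ∀ k, 1 ≤ k → k ≤ N₂ - 1 → g i k + g (i+1) (k+1) ≤ g (i+1) k + g i (k+1))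
    (hj₀ : 1 ≤ j₀) (hj₀2 : j₀ ≤ N₂ - 1) (hj : 1 ≤ j) (hj2 : j ≤ N₂ - 1)
    {p q : ℝ} (hm : memX y j₀ q) (hq1 : y j ≤ q) (hq2 : q ≤ y (j+1))
    (hp1 : x i ≤ p) (hp2 : p ≤ x (i+1)) :
    Fm x y g i j₀ p q = Fm x y g i j p q := by
  have hcl := memX_closed hm
  by_cases he : j₀ = j
  · rw [he]
  · have hN : 2 ≤ N₂ := by omega
    have hjj : j = j₀ + 1 := by
      rcases Nat.lt_or_ge j₀ j with hlt | hge
      · by_contra hne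
        have h5 : y (j-1) < y (j-1+1) := hy (j-1) (by omega) (by omega)
        rw [show j-1+1 = j from by omega] at h5
        have h6 : y (j₀+1) ≤ y (j-1) := xmono hy (j₀+1) (j-1) (by omega) (by omega) (by omega)
        linarith [hcl.2]
      · have hlt : j < j₀ := by omega
        have hy2 : y j₀ < q := by
          rw [memX, if_neg (by omega)] at hm; exact hm.1
        have h6 : y (j+1) ≤ y j₀ := xmono hy (j+1) j₀ (by omega) (by omega) (by omega)
        linarith
    have hqy : q = y (j₀+1) := by
      rw [hjj] at hq1; exact le_antisymm hcl.2 hq1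
    rw [hqy, hjj]
    rw [Fm_top hdx (hy j₀ hj₀ (by omega)) (hs j₀ hj₀ hj₀2) hp2]
    rw [Fm_bot hdx (hy (j₀+1) (by omega) (by omega)) (hs (j₀+1) (by omega) (by omega)) hp1]

/-- `uPL` agrees with `Fm i j` on the closed cell `(i,j)`. -/
lemma uPL_patch {N₁ N₂ : ℕ} {x y : ℕ → ℝ} {g : ℕ → ℕ → ℝ}
    (hN₁ : 2 ≤ N₁) (hN₂ : 2 ≤ N₂)
    (hx : ∀ k, 1 ≤ k → k < N₁ → x k < x (k+1))
    (hy : ∀ k, 1 ≤ k → k < N₂ → y k < y (k+1))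
    (hsub : ∀ i j, 1 ≤ i → i ≤ N₁ - 1 → 1 ≤ j → j ≤ N₂ - 1 →
      g i j + g (i+1) (j+1) ≤ g (i+1) j + g i (j+1))
    {i j : ℕ} (hi : 1 ≤ i) (hi2 : i ≤ N₁ - 1) (hj : 1 ≤ j) (hj2 : j ≤ N₂ - 1)
    {p q : ℝ} (hp1 : x i ≤ p) (hp2 : p ≤ x (i+1)) (hq1 : y j ≤ q) (hq2 : q ≤ y (j+1)) :
    uPL N₁ N₂ x y g p q = Fm x y g i j p q := by
  have hpT1 : x 1 ≤ p := le_trans (xmono hx 1 i le_rfl hi (by omega)) hp1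
  have hpT2 : p ≤ x N₁ := le_trans hp2 (xmono hx (i+1) N₁ (by omega) (by omega) le_rfl)
  have hqT1 : y 1 ≤ q := le_trans (xmono hy 1 j le_rfl hj (by omega)) hq1
  have hqT2 : q ≤ y N₂ := le_trans hq2 (xmono hy (j+1) N₂ (by omega) (by omega) le_rfl)
  obtain ⟨i₀, hi₀, hi₀2, hmi⟩ := locateX hN₁ hx hpT1 hpT2
  obtain ⟨j₀, hj₀, hj₀2, hmj⟩ := locateX hN₂ hy hqT1 hqT2
  have hclq := memX_closed hmj
  rw [uPL_collapse hx hy hsub hi₀ hi₀2 hj₀ hj₀2 ⟨hmi, hmj⟩]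
  rw [Fm_stepX hx (hy j₀ hj₀ (by omega))
      (fun k hk1 hk2 => hsub k j₀ hk1 hk2 hj₀ hj₀2) hi₀ hi₀2 hi hi2 hmi hp1 hp2
      hclq.1 hclq.2]
  exact Fm_stepY hy (hx i hi (by omega))
    (fun k hk1 hk2 => hsub i k hi hi2 hk1 hk2) hj₀ hj₀2 hj hj2 hmj hq1 hq2 hp1 hp2

lemma Fm_corner_ll {x y : ℕ → ℝ} {g : ℕ → ℕ → ℝ} {i j : ℕ}
    (hdx : x i < x (i+1)) (hdy : y j < y (j+1))
    (hs : g i j + g (i+1) (j+1) ≤ g (i+1) j + g i (j+1)) :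
    Fm x y g i j (x i) (y j) = g i j := by
  rw [Fm_left hdx hdy hs le_rfl, colI_bot hdy]

lemma Fm_corner_rl {x y : ℕ → ℝ} {g : ℕ → ℕ → ℝ} {i j : ℕ}
    (hdx : x i < x (i+1)) (hdy : y j < y (j+1))
    (hs : g i j + g (i+1) (j+1) ≤ g (i+1) j + g i (j+1)) :
    Fm x y g i j (x (i+1)) (y j) = g (i+1) j := by
  rw [Fm_right hdx hdy hs hdy.le, colI_bot hdy]

lemma Fm_corner_lt {x y : ℕ → ℝ} {g : ℕ → ℕ → ℝ} {i j : ℕ}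
    (hdx : x i < x (i+1)) (hdy : y j < y (j+1))
    (hs : g i j + g (i+1) (j+1) ≤ g (i+1) j + g i (j+1)) :
    Fm x y g i j (x i) (y (j+1)) = g i (j+1) := by
  rw [Fm_left hdx hdy hs hdy.le, colI_top hdy]

lemma Fm_corner_rt {x y : ℕ → ℝ} {g : ℕ → ℕ → ℝ} {i j : ℕ}
    (hdx : x i < x (i+1)) (hdy : y j < y (j+1))
    (hs : g i j + g (i+1) (j+1) ≤ g (i+1) j + g i (j+1)) :
    Fm x y g i j (x (i+1)) (y (j+1)) = g (i+1) (j+1) := by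
  rw [Fm_right hdx hdy hs le_rfl, colI_top hdy]

/-- `uPL` interpolates the grid values. -/
lemma uPL_grid {N₁ N₂ : ℕ} {x y : ℕ → ℝ} {g : ℕ → ℕ → ℝ}
    (hN₁ : 2 ≤ N₁) (hN₂ : 2 ≤ N₂)
    (hx : ∀ k, 1 ≤ k → k < N₁ → x k < x (k+1))
    (hy : ∀ k, 1 ≤ k → k < N₂ → y k < y (k+1))
    (hsub : ∀ i j, 1 ≤ i → i ≤ N₁ - 1 → 1 ≤ j → j ≤ N₂ - 1 →
      g i j + g (i+1) (j+1) ≤ g (i+1) j + g i (j+1))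
    {i j : ℕ} (hi : 1 ≤ i) (hi2 : i ≤ N₁) (hj : 1 ≤ j) (hj2 : j ≤ N₂) :
    uPL N₁ N₂ x y g (x i) (y j) = g i j := by
  rcases Nat.lt_or_ge i N₁ with hiN | hiN
  · have hdx := hx i hi hiN
    rcases Nat.lt_or_ge j N₂ with hjN | hjN
    · have hdy := hy j hj hjN
      rw [uPL_patch hN₁ hN₂ hx hy hsub hi (by omega) hj (by omega)
        le_rfl hdx.le le_rfl hdy.le]
      exact Fm_corner_ll hdx hdy (hsub i j hi (by omega) hj (by omega))
    · have hj' : j = (N₂ - 1) + 1 := by omega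
      have hdy : y (N₂-1) < y ((N₂-1)+1) := hy (N₂-1) (by omega) (by omega)
      rw [hj']
      rw [uPL_patch hN₁ hN₂ hx hy hsub hi (by omega) (show 1 ≤ N₂-1 by omega) le_rfl
        le_rfl hdx.le hdy.le le_rfl]
      exact Fm_corner_lt hdx hdy (hsub i (N₂-1) hi (by omega) (by omega) le_rfl)
  · have hi' : i = (N₁ - 1) + 1 := by omega
    have hdx : x (N₁-1) < x ((N₁-1)+1) := hx (N₁-1) (by omega) (by omega)
    rcases Nat.lt_or_ge j N₂ with hjN | hjN
    · have hdy := hy j hj hjN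
      rw [hi']
      rw [uPL_patch hN₁ hN₂ hx hy hsub (show 1 ≤ N₁-1 by omega) le_rfl hj (by omega)
        hdx.le le_rfl le_rfl hdy.le]
      exact Fm_corner_rl hdx hdy (hsub (N₁-1) j (by omega) le_rfl hj (by omega))
    · have hj' : j = (N₂ - 1) + 1 := by omega
      have hdy : y (N₂-1) < y ((N₂-1)+1) := hy (N₂-1) (by omega) (by omega)
      rw [hi', hj']
      rw [uPL_patch hN₁ hN₂ hx hy hsub (show 1 ≤ N₁-1 by omega) le_rfl
        (show 1 ≤ N₂-1 by omega) le_rfl hdx.le le_rfl hdy.le le_rfl]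
      exact Fm_corner_rt hdx hdy (hsub (N₁-1) (N₂-1) (by omega) le_rfl (by omega) le_rfl)

/-- `uPL` only depends on grid values with indices in range. -/
lemma uPL_congr {N₁ N₂ : ℕ} {x y : ℕ → ℝ} {g g' : ℕ → ℕ → ℝ}
    (h : ∀ i j, 1 ≤ i → i ≤ N₁ → 1 ≤ j → j ≤ N₂ → g i j = g' i j) (p q : ℝ) :
    uPL N₁ N₂ x y g p q = uPL N₁ N₂ x y g' p q := by
  rw [uPL, uPL]
  refine Finset.sum_congr rfl fun i hi => Finset.sum_congr rfl fun j hj => ?_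
  obtain ⟨hi1, hi2⟩ := Finset.mem_Icc.mp hi
  obtain ⟨hj1, hj2⟩ := Finset.mem_Icc.mp hj
  have e00 := h i j hi1 (by omega) hj1 (by omega)
  have e10 := h (i+1) j (by omega) (by omega) hj1 (by omega)
  have e01 := h i (j+1) hi1 (by omega) (by omega) (by omega)
  have e11 := h (i+1) (j+1) (by omega) (by omega) (by omega) (by omega)
  simp only [u1l, u1u, e00, e10, e01, e11]

/-- chaining a transitive local property through the grid. -/
lemma chain {N : ℕ} {x : ℕ → ℝ} (hN : 2 ≤ N)
    (hx : ∀ k, 1 ≤ k → k < N → x k < x (k+1)) {P : ℝ → ℝ → Prop}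
    (Ptrans : ∀ a b c, P a b → P b c → P a c)
    (hloc : ∀ i, 1 ≤ i → i < N → ∀ p p', x i ≤ p → p ≤ p' → p' ≤ x (i+1) → P p p') :
    ∀ p p', x 1 ≤ p → p ≤ p' → p' ≤ x N → P p p' := by
  induction N, hN using Nat.le_induction with
  | base => exact fun p p' h1 h2 h3 => hloc 1 le_rfl (by omega) p p' h1 h2 h3
  | succ N hN ih =>
    intro p p' h1 h2 h3
    by_cases hp' : p' ≤ x N
    · exact ih (fun k hk1 hk2 => hx k hk1 (by omega))
        (fun i ha hb => hloc i ha (by omega)) p p' h1 h2 hp'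
    · by_cases hp : x N ≤ p
      · exact hloc N (by omega) (by omega) p p' hp h2 h3
      · have hP1 : P p (x N) := ih (fun k hk1 hk2 => hx k hk1 (by omega))
          (fun i ha hb => hloc i ha (by omega)) p (x N) h1 (le_of_not_ge hp) le_rfl
        have hP2 : P (x N) p' := hloc N (by omega) (by omega) (x N) p'
          le_rfl (le_of_not_ge hp') h3
        exact Ptrans _ _ _ hP1 hP2

section Global
variable {N₁ N₂ : ℕ} {x y : ℕ → ℝ} {g : ℕ → ℕ → ℝ} {L : ℝ}

variable (hN₁ : 2 ≤ N₁) (hN₂ : 2 ≤ N₂)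
  (hx : ∀ k, 1 ≤ k → k < N₁ → x k < x (k+1))
  (hy : ∀ k, 1 ≤ k → k < N₂ → y k < y (k+1))
  (hmx : ∀ i j, 1 ≤ i → i ≤ N₁ - 1 → 1 ≤ j → j ≤ N₂ → g i j ≤ g (i+1) j)
  (hmy : ∀ i j, 1 ≤ i → i ≤ N₁ → 1 ≤ j → j ≤ N₂ - 1 → g i j ≤ g i (j+1))
  (hlx : ∀ i j, 1 ≤ i → i ≤ N₁ - 1 → 1 ≤ j → j ≤ N₂ →
    g (i+1) j - g i j ≤ L * (x (i+1) - x i))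
  (hly : ∀ i j, 1 ≤ i → i ≤ N₁ → 1 ≤ j → j ≤ N₂ - 1 →
    g i (j+1) - g i j ≤ L * (y (j+1) - y j))
  (hsub : ∀ i j, 1 ≤ i → i ≤ N₁ - 1 → 1 ≤ j → j ≤ N₂ - 1 →
    g i j + g (i+1) (j+1) ≤ g (i+1) j + g i (j+1))

include hN₁ hN₂ hx hy hmx hmy hlx hly hsub

lemma V_monoLipX {q : ℝ} (hq1 : y 1 ≤ q) (hq2 : q ≤ y N₂)
    {p p' : ℝ} (hp1 : x 1 ≤ p) (hpp : p ≤ p') (hp2 : p' ≤ x N₁) :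
    uPL N₁ N₂ x y g p q ≤ uPL N₁ N₂ x y g p' q ∧
      uPL N₁ N₂ x y g p' q ≤ uPL N₁ N₂ x y g p q + L * (p' - p) := by
  obtain ⟨j₀, hj₀, hj₀2, hmj⟩ := locateX hN₂ hy hq1 hq2
  have hclq := memX_closed hmj
  refine chain hN₁ hx (P := fun p p' => uPL N₁ N₂ x y g p q ≤ uPL N₁ N₂ x y g p' q ∧
      uPL N₁ N₂ x y g p' q ≤ uPL N₁ N₂ x y g p q + L * (p' - p))
    (fun a b c ⟨h1, h2⟩ ⟨h3, h4⟩ => ⟨le_trans h1 h3, by linarith⟩) ?_ p p' hp1 hpp hp2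
  intro i hi1 hi2 p₁ p₂ ha hb hc
  rw [uPL_patch hN₁ hN₂ hx hy hsub hi1 (by omega) hj₀ hj₀2 ha (le_trans hb hc)
    hclq.1 hclq.2]
  rw [uPL_patch hN₁ hN₂ hx hy hsub hi1 (by omega) hj₀ hj₀2 (le_trans ha hb) hc
    hclq.1 hclq.2]
  exact Fm_p (hx i hi1 (by omega))
    (hmx i j₀ hi1 (by omega) hj₀ (by omega))
    (hmx i (j₀+1) hi1 (by omega) (by omega) (by omega))
    (hlx i j₀ hi1 (by omega) hj₀ (by omega))
    (hlx i (j₀+1) hi1 (by omega) (by omega) (by omega)) q hb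

lemma V_monoLipY {p : ℝ} (hp1 : x 1 ≤ p) (hp2 : p ≤ x N₁)
    {q q' : ℝ} (hq1 : y 1 ≤ q) (hqq : q ≤ q') (hq2 : q' ≤ y N₂) :
    uPL N₁ N₂ x y g p q ≤ uPL N₁ N₂ x y g p q' ∧
      uPL N₁ N₂ x y g p q' ≤ uPL N₁ N₂ x y g p q + L * (q' - q) := by
  obtain ⟨i₀, hi₀, hi₀2, hmi⟩ := locateX hN₁ hx hp1 hp2
  have hclp := memX_closed hmi
  refine chain hN₂ hy (P := fun q q' => uPL N₁ N₂ x y g p q ≤ uPL N₁ N₂ x y g p q' ∧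
      uPL N₁ N₂ x y g p q' ≤ uPL N₁ N₂ x y g p q + L * (q' - q))
    (fun a b c ⟨h1, h2⟩ ⟨h3, h4⟩ => ⟨le_trans h1 h3, by linarith⟩) ?_ q q' hq1 hqq hq2
  intro j hj1 hj2 q₁ q₂ ha hb hc
  rw [uPL_patch hN₁ hN₂ hx hy hsub hi₀ hi₀2 hj1 (by omega) hclp.1 hclp.2
    ha (le_trans hb hc)]
  rw [uPL_patch hN₁ hN₂ hx hy hsub hi₀ hi₀2 hj1 (by omega) hclp.1 hclp.2
    (le_trans ha hb) hc]
  exact Fm_q (hy j hj1 (by omega))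
    (hmy (i₀+1) j (by omega) (by omega) hj1 (by omega))
    (hmy i₀ j hi₀ (by omega) hj1 (by omega))
    (hly (i₀+1) j (by omega) (by omega) hj1 (by omega))
    (hly i₀ j hi₀ (by omega) hj1 (by omega)) p hb

lemma V_cons {a b c d : ℝ} (ha : x 1 ≤ a) (hab : a ≤ b) (hb : b ≤ x N₁)
    (hc : y 1 ≤ c) (hcd : c ≤ d) (hd : d ≤ y N₂) :
    uPL N₁ N₂ x y g a c + uPL N₁ N₂ x y g b d ≤
      uPL N₁ N₂ x y g a d + uPL N₁ N₂ x y g b c := by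
  refine chain hN₁ hx (P := fun a b => uPL N₁ N₂ x y g a c + uPL N₁ N₂ x y g b d ≤
      uPL N₁ N₂ x y g a d + uPL N₁ N₂ x y g b c)
    (fun p₁ p₂ p₃ h1 h2 => by linarith) ?_ a b ha hab hb
  intro i hi1 hi2 a' b' hpa hpb hpc
  refine chain hN₂ hy (P := fun c' d' => uPL N₁ N₂ x y g a' c' + uPL N₁ N₂ x y g b' d' ≤
      uPL N₁ N₂ x y g a' d' + uPL N₁ N₂ x y g b' c')
    (fun q₁ q₂ q₃ h1 h2 => by linarith) ?_ c d hc hcd hd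
  intro j hj1 hj2 c' d' hqa hqb hqc
  rw [uPL_patch hN₁ hN₂ hx hy hsub hi1 (by omega) hj1 (by omega) hpa (le_trans hpb hpc)
    hqa (le_trans hqb hqc),
    uPL_patch hN₁ hN₂ hx hy hsub hi1 (by omega) hj1 (by omega) (le_trans hpa hpb) hpc
    (le_trans hqa hqb) hqc,
    uPL_patch hN₁ hN₂ hx hy hsub hi1 (by omega) hj1 (by omega) hpa (le_trans hpb hpc)
    (le_trans hqa hqb) hqc,
    uPL_patch hN₁ hN₂ hx hy hsub hi1 (by omega) hj1 (by omega) (le_trans hpa hpb) hpc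
    hqa (le_trans hqb hqc)]
  exact Fm_sub (hx i hi1 (by omega)) (hy j hj1 (by omega))
    (hsub i j hi1 (by omega) hj1 (by omega)) hpb hqb

end Global

lemma main {N₁ N₂ M : ℕ} (hN₁ : 2 ≤ N₁) (hN₂ : 2 ≤ N₂) {x y : ℕ → ℝ}
    (hx : ∀ i, 1 ≤ i → i < N₁ → x i < x (i + 1))
    (hy : ∀ j, 1 ≤ j → j < N₂ → y j < y (j + 1))
    {L : ℝ} (hL : 0 < L) (a : ℕ → ℕ → ℕ → ℝ) (c : ℕ → ℝ)
    {β₁ β₂ : ℝ} (hβ₁ : ∀ i, 1 ≤ i → i ≤ N₁ - 1 → x (i+1) - x i ≤ β₁)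
    (hβ₂ : ∀ j, 1 ≤ j → j ≤ N₂ - 1 → y (j+1) - y j ≤ β₂)
    (u : ℝ → ℝ → ℝ) (hu : memUc N₁ N₂ M x y L a c u) :
    memUNc N₁ N₂ M x y L a c (uPL N₁ N₂ x y (fun i j => u (x i) (y j))) ∧
    ∀ p ∈ Set.Icc (x 1) (x N₁), ∀ q ∈ Set.Icc (y 1) (y N₂),
      |(u p q - u p (y 1) - u (x 1) q + u (x 1) (y 1))
          - (uPL N₁ N₂ x y (fun i j => u (x i) (y j)) p q
            - uPL N₁ N₂ x y (fun i j => u (x i) (y j)) p (y 1)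
            - uPL N₁ N₂ x y (fun i j => u (x i) (y j)) (x 1) q
            + uPL N₁ N₂ x y (fun i j => u (x i) (y j)) (x 1) (y 1))|
        ≤ 2 * L * (β₁ + β₂) := by
  obtain ⟨⟨hcont, hmono, hrange, h00, h11, hconsv, hlip⟩, hconstr⟩ := hu
  set g : ℕ → ℕ → ℝ := fun i j => u (x i) (y j) with hg
  set V : ℝ → ℝ → ℝ := uPL N₁ N₂ x y g with hVdef
  have hxm : ∀ i, 1 ≤ i → i ≤ N₁ → x i ∈ Set.Icc (x 1) (x N₁) := fun i h1 h2 =>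
    ⟨xmono hx 1 i le_rfl h1 h2, xmono hx i N₁ h1 h2 le_rfl⟩
  have hym : ∀ j, 1 ≤ j → j ≤ N₂ → y j ∈ Set.Icc (y 1) (y N₂) := fun j h1 h2 =>
    ⟨xmono hy 1 j le_rfl h1 h2, xmono hy j N₂ h1 h2 le_rfl⟩
  have hmx : ∀ i j, 1 ≤ i → i ≤ N₁ - 1 → 1 ≤ j → j ≤ N₂ → g i j ≤ g (i+1) j :=
    fun i j hi hi2 hj hj2 => hmono (x i) (x (i+1)) (y j) (y j)
      (hxm i hi (by omega)) (hxm (i+1) (by omega) (by omega))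
      (hym j hj hj2) (hym j hj hj2) (hx i hi (by omega)).le le_rfl
  have hmy : ∀ i j, 1 ≤ i → i ≤ N₁ → 1 ≤ j → j ≤ N₂ - 1 → g i j ≤ g i (j+1) :=
    fun i j hi hi2 hj hj2 => hmono (x i) (x i) (y j) (y (j+1))
      (hxm i hi hi2) (hxm i hi hi2)
      (hym j hj (by omega)) (hym (j+1) (by omega) (by omega)) le_rfl
      (hy j hj (by omega)).le
  have hlx : ∀ i j, 1 ≤ i → i ≤ N₁ - 1 → 1 ≤ j → j ≤ N₂ →
      g (i+1) j - g i j ≤ L * (x (i+1) - x i) := by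
    intro i j hi hi2 hj hj2
    have h := hlip (x (i+1)) (x i) (y j) (y j) (hxm (i+1) (by omega) (by omega))
      (hxm i hi (by omega)) (hym j hj hj2) (hym j hj hj2)
    rw [sub_self, abs_zero, add_zero] at h
    have h2 : |x (i+1) - x i| = x (i+1) - x i := abs_of_nonneg (by
      have := hx i hi (by omega); linarith)
    rw [h2] at h
    have := le_abs_self (u (x (i+1)) (y j) - u (x i) (y j))
    simp only [hg]; linarith
  have hly : ∀ i j, 1 ≤ i → i ≤ N₁ → 1 ≤ j → j ≤ N₂ - 1 →
      g i (j+1) - g i j ≤ L * (y (j+1) - y j) := by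
    intro i j hi hi2 hj hj2
    have h := hlip (x i) (x i) (y (j+1)) (y j) (hxm i hi hi2) (hxm i hi hi2)
      (hym (j+1) (by omega) (by omega)) (hym j hj (by omega))
    rw [sub_self, abs_zero, zero_add] at h
    have h2 : |y (j+1) - y j| = y (j+1) - y j := abs_of_nonneg (by
      have := hy j hj (by omega); linarith)
    rw [h2] at h
    have := le_abs_self (u (x i) (y (j+1)) - u (x i) (y j))
    simp only [hg]; linarith
  have hsub : ∀ i j, 1 ≤ i → i ≤ N₁ - 1 → 1 ≤ j → j ≤ N₂ - 1 →
      g i j + g (i+1) (j+1) ≤ g (i+1) j + g i (j+1) := by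
    intro i j hi hi2 hj hj2
    have h := hconsv (x i) (x (i+1)) (y j) (y (j+1))
      (hxm i hi (by omega)).1 (hx i hi (by omega)).le (hxm (i+1) (by omega) (by omega)).2
      (hym j hj (by omega)).1 (hy j hj (by omega)).le (hym (j+1) (by omega) (by omega)).2
    simp only [hg]; linarith
  -- grid values of V
  have Vg : ∀ i j, 1 ≤ i → i ≤ N₁ → 1 ≤ j → j ≤ N₂ → V (x i) (y j) = u (x i) (y j) :=
    fun i j hi hi2 hj hj2 => uPL_grid hN₁ hN₂ hx hy hsub hi hi2 hj hj2
  -- global properties of V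
  have VX := fun {q} hq1 hq2 {p p'} hp1 hpp hp2 =>
    V_monoLipX hN₁ hN₂ hx hy hmx hmy hlx hly hsub (q := q) hq1 hq2 (p := p) (p' := p')
      hp1 hpp hp2
  have VY := fun {p} hp1 hp2 {q q'} hq1 hqq hq2 =>
    V_monoLipY hN₁ hN₂ hx hy hmx hmy hlx hly hsub (p := p) hp1 hp2 (q := q) (q' := q')
      hq1 hqq hq2
  have VC := fun {a b c d} ha hab hb hc hcd hd =>
    V_cons hN₁ hN₂ hx hy hmx hmy hlx hly hsub (a := a) (b := b) (c := c) (d := d)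
      ha hab hb hc hcd hd
  -- two-point Lipschitz bound for V
  have lipV : ∀ p p' q q', p ∈ Set.Icc (x 1) (x N₁) → p' ∈ Set.Icc (x 1) (x N₁) →
      q ∈ Set.Icc (y 1) (y N₂) → q' ∈ Set.Icc (y 1) (y N₂) →
      |V p q - V p' q'| ≤ L * (|p - p'| + |q - q'|) := by
    have hXa : ∀ p p' q, p ∈ Set.Icc (x 1) (x N₁) → p' ∈ Set.Icc (x 1) (x N₁) →
        q ∈ Set.Icc (y 1) (y N₂) → |V p q - V p' q| ≤ L * |p - p'| := by
      intro p p' q hp hp' hq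
      rcases le_total p p' with h | h
      · obtain ⟨h1, h2⟩ := VX hq.1 hq.2 hp.1 h hp'.2
        rw [abs_of_nonpos (by linarith), abs_of_nonpos (by linarith)]
        nlinarith
      · obtain ⟨h1, h2⟩ := VX hq.1 hq.2 hp'.1 h hp.2
        rw [abs_of_nonneg (by linarith), abs_of_nonneg (by linarith)]
        nlinarith
    have hYa : ∀ p q q', p ∈ Set.Icc (x 1) (x N₁) →
        q ∈ Set.Icc (y 1) (y N₂) → q' ∈ Set.Icc (y 1) (y N₂) →
        |V p q - V p q'| ≤ L * |q - q'| := by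
      intro p q q' hp hq hq'
      rcases le_total q q' with h | h
      · obtain ⟨h1, h2⟩ := VY hp.1 hp.2 hq.1 h hq'.2
        rw [abs_of_nonpos (by linarith), abs_of_nonpos (by linarith)]
        nlinarith
      · obtain ⟨h1, h2⟩ := VY hp.1 hp.2 hq'.1 h hq.2
        rw [abs_of_nonneg (by linarith), abs_of_nonneg (by linarith)]
        nlinarith
    intro p p' q q' hp hp' hq hq'
    have t1 := hXa p p' q hp hp' hq
    have t2 := hYa p' q q' hp' hq hq'
    have := abs_sub_abs_le_abs_sub (V p q - V p' q') 0
    calc |V p q - V p' q'| ≤ |V p q - V p' q| + |V p' q - V p' q'| := by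
          have := abs_add_le (V p q - V p' q) (V p' q - V p' q')
          simpa using this
      _ ≤ L * |p - p'| + L * |q - q'| := add_le_add t1 t2
      _ = L * (|p - p'| + |q - q'|) := by ring
  have hx1N : x 1 ≤ x N₁ := xmono hx 1 N₁ le_rfl (by omega) le_rfl
  have hy1N : y 1 ≤ y N₂ := xmono hy 1 N₂ le_rfl (by omega) le_rfl
  have hx1m : x 1 ∈ Set.Icc (x 1) (x N₁) := ⟨le_rfl, hx1N⟩
  have hy1m : y 1 ∈ Set.Icc (y 1) (y N₂) := ⟨le_rfl, hy1N⟩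
  have hxNm : x N₁ ∈ Set.Icc (x 1) (x N₁) := ⟨hx1N, le_rfl⟩
  have hyNm : y N₂ ∈ Set.Icc (y 1) (y N₂) := ⟨hy1N, le_rfl⟩
  have hV00 : V (x 1) (y 1) = 0 := by
    rw [Vg 1 1 le_rfl (by omega) le_rfl (by omega)]; exact h00
  have hV11 : V (x N₁) (y N₂) = 1 := by
    rw [Vg N₁ N₂ (by omega) le_rfl (by omega) le_rfl]; exact h11
  have monoV : ∀ p p' q q', p ∈ Set.Icc (x 1) (x N₁) → p' ∈ Set.Icc (x 1) (x N₁) →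
      q ∈ Set.Icc (y 1) (y N₂) → q' ∈ Set.Icc (y 1) (y N₂) →
      p ≤ p' → q ≤ q' → V p q ≤ V p' q' := by
    intro p p' q q' hp hp' hq hq' hpp hqq
    exact le_trans (VX hq.1 hq.2 hp.1 hpp hp'.2).1 (VY hp'.1 hp'.2 hq.1 hqq hq'.2).1
  refine ⟨⟨⟨⟨?_, monoV, ?_, hV00, hV11,
      fun a' b' c' d' ha hab hb hc hcd hd => VC ha hab hb hc hcd hd, lipV⟩, ?_⟩, ?_⟩, ?_⟩
  · -- continuity
    refine LipschitzOnWith.continuousOn (K := (2*L).toNNReal) ?_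
    rw [lipschitzOnWith_iff_dist_le_mul]
    rintro ⟨p, q⟩ ⟨hp, hq⟩ ⟨p', q'⟩ ⟨hp', hq'⟩
    have hd := lipV p p' q q' hp hp' hq hq'
    have hK : ((2*L).toNNReal : ℝ) = 2*L := Real.coe_toNNReal _ (by positivity)
    rw [hK, Prod.dist_eq, Real.dist_eq, Real.dist_eq, Real.dist_eq]
    have h1 : |p - p'| ≤ max |p - p'| |q - q'| := le_max_left _ _
    have h2 : |q - q'| ≤ max |p - p'| |q - q'| := le_max_right _ _
    nlinarith [abs_nonneg (p - p'), abs_nonneg (q - q')]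
  · -- range
    intro p hp q hq
    constructor
    · rw [← hV00]; exact monoV (x 1) p (y 1) q hx1m hp hy1m hq hp.1 hq.1
    · rw [← hV11]; exact monoV p (x N₁) q (y N₂) hp hxNm hq hyNm hp.2 hq.2
  · -- linear constraints
    intro l hl
    refine le_trans (le_of_eq (Finset.sum_congr rfl fun i hi =>
      Finset.sum_congr rfl fun j hj => ?_)) (hconstr l hl)
    obtain ⟨hi1, hi2⟩ := Finset.mem_Icc.mp hi
    obtain ⟨hj1, hj2⟩ := Finset.mem_Icc.mp hj
    rw [Vg i j hi1 hi2 hj1 hj2]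
  · -- self-coincidence
    intro p hp q hq
    exact (uPL_congr (g := fun i j => V (x i) (y j)) (g' := g)
      (fun i j hi hi2 hj hj2 => Vg i j hi hi2 hj hj2) p q).symm
  · -- Kolmogorov pseudo-distance bound
    intro p hp q hq
    obtain ⟨i₀, hi₀, hi₀2, hmi⟩ := locateX hN₁ hx hp.1 hp.2
    obtain ⟨j₀, hj₀, hj₀2, hmj⟩ := locateX hN₂ hy hq.1 hq.2
    obtain ⟨hpa, hpb⟩ := memX_closed hmi
    obtain ⟨hqa, hqb⟩ := memX_closed hmj
    have hA : x i₀ ∈ Set.Icc (x 1) (x N₁) := hxm i₀ hi₀ (by omega)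
    have hB : x (i₀+1) ∈ Set.Icc (x 1) (x N₁) := hxm (i₀+1) (by omega) (by omega)
    have hC : y j₀ ∈ Set.Icc (y 1) (y N₂) := hym j₀ hj₀ (by omega)
    have hD : y (j₀+1) ∈ Set.Icc (y 1) (y N₂) := hym (j₀+1) (by omega) (by omega)
    have hdx := hx i₀ hi₀ (by omega)
    have hdy := hy j₀ hj₀ (by omega)
    -- u chain
    have c1 := hconsv (x i₀) p (y 1) q hA.1 hpa hp.2 le_rfl hq.1 hq.2
    have c2 := hconsv (x 1) (x i₀) (y j₀) q le_rfl hA.1 hA.2 hC.1 hqa hq.2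
    have c3 := hconsv p (x (i₀+1)) (y 1) (y (j₀+1)) hp.1 hpb hB.2 le_rfl hD.1 hD.2
    have c4 := hconsv (x 1) p q (y (j₀+1)) le_rfl hp.1 hp.2 hq.1 hqb hD.2
    -- V chain
    have v1 := VC hA.1 hpa hp.2 le_rfl hq.1 hq.2
    have v2 := VC le_rfl hA.1 hA.2 hC.1 hqa hq.2
    have v3 := VC hp.1 hpb hB.2 le_rfl hD.1 hD.2
    have v4 := VC le_rfl hp.1 hp.2 hq.1 hqb hD.2
    -- width bound
    have t1 := hlip (x i₀) (x (i₀+1)) (y j₀) (y (j₀+1)) hA hB hC hD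
    have t2 := hlip (x i₀) (x (i₀+1)) (y 1) (y 1) hA hB hy1m hy1m
    have t3 := hlip (x 1) (x 1) (y j₀) (y (j₀+1)) hx1m hx1m hC hD
    have a1 : |x i₀ - x (i₀+1)| = x (i₀+1) - x i₀ := by
      rw [abs_sub_comm]; exact abs_of_nonneg (by linarith)
    have a2 : |y j₀ - y (j₀+1)| = y (j₀+1) - y j₀ := by
      rw [abs_sub_comm]; exact abs_of_nonneg (by linarith)
    rw [a1, a2] at t1
    rw [sub_self, abs_zero, add_zero, a1] at t2
    rw [sub_self, abs_zero, zero_add, a2] at t3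
    obtain ⟨t1a, t1b⟩ := abs_le.mp t1
    obtain ⟨t2a, t2b⟩ := abs_le.mp t2
    obtain ⟨t3a, t3b⟩ := abs_le.mp t3
    have hb1 := hβ₁ i₀ hi₀ hi₀2
    have hb2 := hβ₂ j₀ hj₀ hj₀2
    have m1 : L * ((x (i₀+1) - x i₀) + (y (j₀+1) - y j₀)) ≤ L * (β₁ + β₂) :=
      mul_le_mul_of_nonneg_left (by linarith) hL.le
    have m2 : L * (x (i₀+1) - x i₀) ≤ L * β₁ := mul_le_mul_of_nonneg_left hb1 hL.le
    have m3 : L * (y (j₀+1) - y j₀) ≤ L * β₂ := mul_le_mul_of_nonneg_left hb2 hL.le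
    -- grid equalities
    have gAC := Vg i₀ j₀ hi₀ (by omega) hj₀ (by omega)
    have gAy := Vg i₀ 1 hi₀ (by omega) le_rfl (by omega)
    have gxC := Vg 1 j₀ le_rfl (by omega) hj₀ (by omega)
    have g11 := Vg 1 1 le_rfl (by omega) le_rfl (by omega)
    have gBD := Vg (i₀+1) (j₀+1) (by omega) (by omega) (by omega) (by omega)
    have gBy := Vg (i₀+1) 1 (by omega) (by omega) le_rfl (by omega)
    have gxD := Vg 1 (j₀+1) le_rfl (by omega) (by omega) (by omega)
    refine abs_le.mpr ⟨by linarith, by linarith⟩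


/-- Corollary 5.1 (Kolmogorov pseudo-metric, simple-function case): every `u ∈ 𝒰^c` is within
Kolmogorov pseudo-distance `2L(β₁+β₂)` of its Type-1 PLA, which belongs to `𝒰_N^c`; since
`𝒰_N^c ⊆ 𝒰^c`, both deviations defining the Hausdorff distance are bounded by `2L(β₁+β₂)`. -/
theorem corollary51_hausdorff_bound
    (N₁ N₂ M : ℕ) (hN₁ : 2 ≤ N₁) (hN₂ : 2 ≤ N₂)
    (x y : ℕ → ℝ)
    (hx : ∀ i, 1 ≤ i → i < N₁ → x i < x (i + 1))
    (hy : ∀ j, 1 ≤ j → j < N₂ → y j < y (j + 1))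
    (L : ℝ) (hL : 0 < L)
    (a : ℕ → ℕ → ℕ → ℝ) (c : ℕ → ℝ) :
    let β₁ := (Finset.Icc 1 (N₁ - 1)).sup' (Finset.nonempty_Icc.mpr (by omega))
      (fun i => x (i + 1) - x i)
    let β₂ := (Finset.Icc 1 (N₂ - 1)).sup' (Finset.nonempty_Icc.mpr (by omega))
      (fun j => y (j + 1) - y j)
    let dIle : (ℝ → ℝ → ℝ) → (ℝ → ℝ → ℝ) → ℝ → Prop := fun u v r =>
      ∀ p ∈ Set.Icc (x 1) (x N₁), ∀ q ∈ Set.Icc (y 1) (y N₂),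
        |(u p q - u p (y 1) - u (x 1) q + u (x 1) (y 1))
            - (v p q - v p (y 1) - v (x 1) q + v (x 1) (y 1))| ≤ r
    (∀ u : ℝ → ℝ → ℝ, memUc N₁ N₂ M x y L a c u →
      memUNc N₁ N₂ M x y L a c (uPL N₁ N₂ x y (fun i j => u (x i) (y j))) ∧
      dIle u (uPL N₁ N₂ x y (fun i j => u (x i) (y j))) (2 * L * (β₁ + β₂))) ∧
    (∀ v : ℝ → ℝ → ℝ, memUNc N₁ N₂ M x y L a c v → memUc N₁ N₂ M x y L a c v) ∧
    (∀ u : ℝ → ℝ → ℝ, memUc N₁ N₂ M x y L a c u →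
      ∃ v : ℝ → ℝ → ℝ, memUNc N₁ N₂ M x y L a c v ∧ dIle u v (2 * L * (β₁ + β₂))) ∧
    (∀ v : ℝ → ℝ → ℝ, memUNc N₁ N₂ M x y L a c v →
      ∃ u : ℝ → ℝ → ℝ, memUc N₁ N₂ M x y L a c u ∧ dIle v u (2 * L * (β₁ + β₂))) := by
  intro β₁ β₂ dIle
  have hβ₁ : ∀ i, 1 ≤ i → i ≤ N₁ - 1 → x (i+1) - x i ≤ β₁ := fun i h1 h2 =>
    Finset.le_sup' (fun i => x (i + 1) - x i) (Finset.mem_Icc.mpr ⟨h1, h2⟩)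
  have hβ₂ : ∀ j, 1 ≤ j → j ≤ N₂ - 1 → y (j+1) - y j ≤ β₂ := fun j h1 h2 =>
    Finset.le_sup' (fun j => y (j + 1) - y j) (Finset.mem_Icc.mpr ⟨h1, h2⟩)
  have hb1 : 0 < β₁ := lt_of_lt_of_le (by have := hx 1 le_rfl (by omega); linarith)
    (hβ₁ 1 le_rfl (by omega))
  have hb2 : 0 < β₂ := lt_of_lt_of_le (by have := hy 1 le_rfl (by omega); linarith)
    (hβ₂ 1 le_rfl (by omega))
  have hpos : 0 ≤ 2 * L * (β₁ + β₂) := by positivity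
  have hmain := fun (u : ℝ → ℝ → ℝ) (hu : memUc N₁ N₂ M x y L a c u) =>
    main hN₁ hN₂ hx hy hL a c hβ₁ hβ₂ u hu
  refine ⟨fun u hu => ⟨(hmain u hu).1, fun p hp q hq => (hmain u hu).2 p hp q hq⟩,
    fun v hv => hv.1, ?_, ?_⟩
  · intro u hu
    exact ⟨_, (hmain u hu).1, (hmain u hu).2⟩
  · intro v hv
    refine ⟨v, hv.1, fun p hp q hq => ?_⟩
    rw [sub_self, abs_zero]
    exact hpos


end
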